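/- Let N ≥ 1 and let A_0, A_1, …, A_N and D_1, …, D_N be real d×d matrices. For 0 ≤ i ≤ j ≤ N define the partial product P(i,j) := A_i · (Id + D_{i+1}) · A_{i+1} · (Id + D_{i+2}) · ⋯ · (Id + D_j) · A_j (so that P(i,i) = A_i). Then P(0,N) = A_0·A_1·⋯·A_N + Σ_{ℓ=1}^{N} (−1)^{ℓ+1} Σ_{1 ≤ k_1 < k_2 < ⋯ < k_ℓ ≤ N} P(0, k_1 − 1) · D_{k_1} · P(k_1, k_2 − 1) · D_{k_2} · ⋯ · D_{k_ℓ} · P(k_ℓ, N). -/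

import Mathlib

/-- The partial product `P(i,j) = A_i (Id + D_{i+1}) A_{i+1} ⋯ (Id + D_j) A_j`. -/
noncomputable def partialProd {d : ℕ} (A D : ℕ → Matrix (Fin d) (Fin d) ℝ) (i j : ℕ) :
    Matrix (Fin d) (Fin d) ℝ :=
  A i * ((List.range (j - i)).map (fun t => (1 + D (i + t + 1)) * A (i + t + 1))).prod

/-- Given a strictly increasing list `[k₁, …, k_ℓ]` of jump indices, the corresponding term
`P(prev, k₁ − 1) · D_{k₁} · P(k₁, k₂ − 1) · D_{k₂} ⋯ D_{k_ℓ} · P(k_ℓ, N)`. -/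
noncomputable def jumpTerm {d : ℕ} (A D : ℕ → Matrix (Fin d) (Fin d) ℝ) (N : ℕ) :
    ℕ → List ℕ → Matrix (Fin d) (Fin d) ℝ
  | prev, [] => partialProd A D prev N
  | prev, k :: ks => partialProd A D prev (k - 1) * D k * jumpTerm A D N k ks

section Aux

variable {d : ℕ} (A D : ℕ → Matrix (Fin d) (Fin d) ℝ)

lemma partialProd_self (i : ℕ) : partialProd A D i i = A i := by
  simp [partialProd]

lemma partialProd_succ_right {prev N : ℕ} (h : prev ≤ N) :
    partialProd A D prev (N + 1) =
      partialProd A D prev N * ((1 + D (N + 1)) * A (N + 1)) := by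
  unfold partialProd
  have h1 : N + 1 - prev = (N - prev) + 1 := by omega
  have h2 : prev + (N - prev) + 1 = N + 1 := by omega
  rw [h1, List.range_succ, List.map_append, List.prod_append]
  simp [h2, mul_assoc]

lemma jumpTerm_succ {N : ℕ} :
    ∀ (ks : List ℕ) (prev : ℕ), prev ≤ N → (∀ k ∈ ks, k ≤ N) →
      jumpTerm A D (N + 1) prev ks =
        jumpTerm A D N prev ks * ((1 + D (N + 1)) * A (N + 1))
  | [], prev, hp, _ => by
      simp only [jumpTerm]
      exact partialProd_succ_right A D hp
  | k :: ks, prev, hp, hks => by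
      simp only [jumpTerm]
      rw [jumpTerm_succ ks k (hks k (by simp)) (fun x hx => hks x (by simp [hx]))]
      simp only [mul_assoc]

lemma jumpTerm_append {N : ℕ} :
    ∀ (ks : List ℕ) (prev : ℕ), prev ≤ N → (∀ k ∈ ks, k ≤ N) →
      jumpTerm A D (N + 1) prev (ks ++ [N + 1]) =
        jumpTerm A D N prev ks * (D (N + 1) * A (N + 1))
  | [], prev, hp, _ => by
      simp only [jumpTerm, List.nil_append]
      rw [show N + 1 - 1 = N from rfl, partialProd_self]
      simp [jumpTerm, mul_assoc]
  | k :: ks, prev, hp, hks => by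
      simp only [jumpTerm, List.cons_append, List.append_eq]
      rw [jumpTerm_append ks k (hks k (by simp)) (fun x hx => hks x (by simp [hx]))]
      simp only [mul_assoc]

lemma sort_insert_max {s : Finset ℕ} {a : ℕ} (h : ∀ b ∈ s, b < a) :
    (insert a s).sort (· ≤ ·) = s.sort (· ≤ ·) ++ [a] := by
  have ha : a ∉ s := fun hmem => lt_irrefl a (h a hmem)
  have hperm : List.Perm ((insert a s).sort (· ≤ ·)) (s.sort (· ≤ ·) ++ [a]) :=
    ((Finset.sort_perm_toList _ _).trans
      ((Finset.toList_insert ha).trans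
        (List.Perm.cons a (Finset.sort_perm_toList s (· ≤ ·)).symm))).trans
      (List.perm_append_singleton _ _).symm
  refine List.Perm.eq_of_pairwise' (Finset.pairwise_sort _ _) ?_ hperm
  · rw [List.pairwise_append]
    refine ⟨Finset.pairwise_sort _ _, List.pairwise_singleton _ a, ?_⟩
    intro x hx y hy
    rw [List.mem_singleton] at hy
    subst hy
    exact le_of_lt (h x ((Finset.mem_sort _).1 hx))

lemma key (N : ℕ) :
    ∑ s ∈ (Finset.Icc 1 N).powerset,
        (-1 : ℝ) ^ s.card • jumpTerm A D N 0 (s.sort (· ≤ ·)) =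
      ((List.range (N + 1)).map A).prod := by
  induction N with
  | zero =>
      simp [jumpTerm, partialProd, List.range_succ]
  | succ N ih =>
      have hIcc : Finset.Icc 1 (N + 1) = insert (N + 1) (Finset.Icc 1 N) := by
        ext x
        simp only [Finset.mem_Icc, Finset.mem_insert]
        omega
      have hnot : N + 1 ∉ Finset.Icc 1 N := by simp
      rw [hIcc, Finset.sum_powerset_insert hnot]
      have hmem : ∀ s ∈ (Finset.Icc 1 N).powerset, ∀ k ∈ s.sort (· ≤ ·), k ≤ N := by
        intro s hs k hk
        have := (Finset.mem_powerset.1 hs) ((Finset.mem_sort _).1 hk)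
        exact (Finset.mem_Icc.1 this).2
      have h1 : ∀ s ∈ (Finset.Icc 1 N).powerset,
          (-1 : ℝ) ^ s.card • jumpTerm A D (N + 1) 0 (s.sort (· ≤ ·)) =
          ((-1 : ℝ) ^ s.card • jumpTerm A D N 0 (s.sort (· ≤ ·))) *
            ((1 + D (N + 1)) * A (N + 1)) := by
        intro s hs
        rw [jumpTerm_succ A D _ 0 (Nat.zero_le N) (hmem s hs), smul_mul_assoc]
      have h2 : ∀ s ∈ (Finset.Icc 1 N).powerset,
          (-1 : ℝ) ^ (insert (N + 1) s).card •
            jumpTerm A D (N + 1) 0 ((insert (N + 1) s).sort (· ≤ ·)) =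
          -(((-1 : ℝ) ^ s.card • jumpTerm A D N 0 (s.sort (· ≤ ·))) *
            (D (N + 1) * A (N + 1))) := by
        intro s hs
        have hsub := Finset.mem_powerset.1 hs
        have hns : N + 1 ∉ s := fun hmem' => hnot (hsub hmem')
        have hlt : ∀ b ∈ s, b < N + 1 := by
          intro b hb
          have := Finset.mem_Icc.1 (hsub hb)
          omega
        rw [Finset.card_insert_of_notMem hns, sort_insert_max hlt,
          jumpTerm_append A D _ 0 (Nat.zero_le N) (hmem s hs), pow_succ]
        rw [smul_mul_assoc]
        simp [smul_smul]
      rw [Finset.sum_congr rfl h1, Finset.sum_congr rfl h2, Finset.sum_neg_distrib,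
        ← Finset.sum_mul, ← Finset.sum_mul, ih]
      rw [List.range_succ, List.map_append, List.prod_append]
      have : (1 + D (N + 1)) * A (N + 1) = A (N + 1) + D (N + 1) * A (N + 1) := by
        rw [add_mul, one_mul]
      rw [this, mul_add]
      simp [List.range_succ, mul_assoc]

end Aux

/-- inclusion–exclusion identity for products with jump factors:
`P(0,N) = A_0⋯A_N + Σ_{ℓ=1}^{N} (−1)^{ℓ+1} Σ_{1 ≤ k₁ < ⋯ < k_ℓ ≤ N}
P(0,k₁−1)·D_{k₁}·P(k₁,k₂−1)·D_{k₂}⋯D_{k_ℓ}·P(k_ℓ,N)`,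
where the inner sum ranges over all `ℓ`-element subsets of `{1, …, N}` listed increasingly. -/
theorem partialProd_eq_prod_add_inclusion_exclusion
    (d N : ℕ) (hN : 1 ≤ N) (A D : ℕ → Matrix (Fin d) (Fin d) ℝ) :
    partialProd A D 0 N =
      ((List.range (N + 1)).map A).prod +
        ∑ l ∈ Finset.Icc 1 N, (-1 : ℝ) ^ (l + 1) •
          ∑ s ∈ Finset.powersetCard l (Finset.Icc 1 N),
            jumpTerm A D N 0 (s.sort (· ≤ ·)) := by
  have hk := key A D N
  rw [Finset.sum_powerset] at hk
  have hcard : (Finset.Icc 1 N).card = N := by simp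
  rw [hcard] at hk
  have hrange : Finset.range (N + 1) = insert 0 (Finset.Icc 1 N) := by
    ext x; simp [Finset.mem_range, Finset.mem_Icc]; omega
  rw [hrange, Finset.sum_insert (by simp)] at hk
  rw [Finset.powersetCard_zero] at hk
  rw [Finset.sum_singleton] at hk
  simp only [Finset.card_empty, pow_zero, one_smul, Finset.sort_empty] at hk
  have hjm : jumpTerm A D N 0 ([] : List ℕ) = partialProd A D 0 N := rfl
  rw [hjm] at hk
  have h3 : ∀ l ∈ Finset.Icc 1 N,
      (-1 : ℝ) ^ (l + 1) • ∑ s ∈ Finset.powersetCard l (Finset.Icc 1 N),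
          jumpTerm A D N 0 (s.sort (· ≤ ·)) =
      -∑ s ∈ Finset.powersetCard l (Finset.Icc 1 N),
          (-1 : ℝ) ^ s.card • jumpTerm A D N 0 (s.sort (· ≤ ·)) := by
    intro l _
    rw [Finset.smul_sum, ← Finset.sum_neg_distrib]
    refine Finset.sum_congr rfl fun s hs => ?_
    have hc : s.card = l := (Finset.mem_powersetCard.1 hs).2
    rw [hc, pow_succ]
    simp [mul_smul]
  rw [Finset.sum_congr rfl h3, Finset.sum_neg_distrib, ← sub_eq_add_neg]
  exact eq_sub_of_add_eq hk
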